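/- Let k, n be positive integers with 1 ≤ k ≤ n, let f(x) = 2x − 1, and let s⃗ = (s₁,…,s_k) be a k-tuple of positive integers. If p is a prime with n/(k + 1/2) < p ≤ n/k and p > 2k, then the p-adic valuation of H_{k,f}(s⃗,n) := ∑_{1 ≤ i₁ < ⋯ < i_k ≤ n} ∏_{j=1}^k 1/(2i_j − 1)^{s_j} equals −(s₁ + ⋯ + s_k). -/

import Mathlib

open Finset

/-- `H_{k,f}(s⃗,n) = ∑_{1 ≤ i₁ < ⋯ < i_k ≤ n} ∏_j 1/(2 i_j − 1)^{s_j}` for `f(x) = 2x − 1`. -/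
noncomputable def Hodd (k n : ℕ) (s : Fin k → ℕ) : ℚ :=
  ∑ i ∈ (Fintype.piFinset fun _ : Fin k => Finset.Icc 1 n).filter
      (fun i => ∀ p q : Fin k, p < q → i p < i q),
    ∏ j : Fin k, (1 : ℚ) / (2 * ((i j : ℕ) : ℚ) - 1) ^ (s j)

lemma aux_padicValRat_prod {p : ℕ} [Fact p.Prime] {α : Type*} (s : Finset α) (f : α → ℚ)
    (hf : ∀ i ∈ s, f i ≠ 0) :
    padicValRat p (∏ i ∈ s, f i) = ∑ i ∈ s, padicValRat p (f i) := by
  induction s using Finset.cons_induction with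
  | empty => simp
  | cons a t ha ih =>
    rw [Finset.prod_cons, Finset.sum_cons,
      padicValRat.mul (hf a (Finset.mem_cons_self _ _))
        (Finset.prod_ne_zero_iff.2 fun i hi => hf i (Finset.mem_cons_of_mem hi)),
      ih fun i hi => hf i (Finset.mem_cons_of_mem hi)]

lemma aux_lt_padicValRat_sum {p : ℕ} [Fact p.Prime] {α : Type*} {s : Finset α}
    (hs : s.Nonempty) {f : α → ℚ} (hpos : ∀ i ∈ s, 0 < f i) {c : ℤ}
    (h : ∀ i ∈ s, c < padicValRat p (f i)) :
    c < padicValRat p (∑ i ∈ s, f i) := by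
  induction s using Finset.cons_induction with
  | empty => exact absurd hs (by simp)
  | cons a t ha ih =>
    rw [Finset.sum_cons]
    rcases t.eq_empty_or_nonempty with rfl | ht
    · simpa using h a (Finset.mem_cons_self _ _)
    · have hfa : 0 < f a := hpos a (Finset.mem_cons_self _ _)
      have hft : 0 < ∑ i ∈ t, f i :=
        Finset.sum_pos (fun i hi => hpos i (Finset.mem_cons_of_mem hi)) ht
      have hne : f a + ∑ i ∈ t, f i ≠ 0 := by positivity
      have h1 := h a (Finset.mem_cons_self _ _)
      have h2 := ih ht (fun i hi => hpos i (Finset.mem_cons_of_mem hi))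
        (fun i hi => h i (Finset.mem_cons_of_mem hi))
      exact lt_of_lt_of_le (lt_min h1 h2) (padicValRat.min_le_padicValRat_add hne)

theorem stmt6 (k n : ℕ) (hk : 1 ≤ k) (hkn : k ≤ n) (s : Fin k → ℕ) (hs : ∀ j, 1 ≤ s j)
    (p : ℕ) (hp : p.Prime) (hp1 : (n : ℝ) / ((k : ℝ) + 1 / 2) < (p : ℝ))
    (hp2 : (p : ℝ) ≤ (n : ℝ) / (k : ℝ)) (hp3 : 2 * k < p) :
    padicValRat p (Hodd k n s) = -(∑ j : Fin k, (s j : ℤ)) := by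
  haveI : Fact p.Prime := ⟨hp⟩
  have hp2' : 2 ≤ p := hp.two_le
  have hp3' : 3 ≤ p := by omega
  -- p is odd
  have hpodd : p % 2 = 1 := Nat.odd_iff.mp (hp.odd_of_ne_two (by omega))
  -- k * p ≤ n
  have hkR : (0 : ℝ) < (k : ℝ) := by positivity
  have hkp : k * p ≤ n := by
    have h1 : (p : ℝ) * (k : ℝ) ≤ (n : ℝ) := (le_div_iff₀ hkR).mp hp2
    have h2 : ((k * p : ℕ) : ℝ) ≤ (n : ℝ) := by push_cast; linarith
    exact_mod_cast h2
  -- 2n < (2k+1) p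
  have h2n : 2 * n < (2 * k + 1) * p := by
    have hpos2 : (0 : ℝ) < (k : ℝ) + 1 / 2 := by positivity
    have h1 : (n : ℝ) < (p : ℝ) * ((k : ℝ) + 1 / 2) := (div_lt_iff₀ hpos2).mp hp1
    have h2 : ((2 * n : ℕ) : ℝ) < (((2 * k + 1) * p : ℕ) : ℝ) := by push_cast; nlinarith
    exact_mod_cast h2
  have hppn : 2 * n < p * p :=
    lt_of_lt_of_le h2n (Nat.mul_le_mul_right p (by omega))
  -- the special tuple
  set a : Fin k → ℕ := fun j => (j : ℕ) * p + (p + 1) / 2 with ha_def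
  have h2a : ∀ j : Fin k, 2 * a j - 1 = 2 * ((j : ℕ) * p) + p := by
    intro j; simp only [ha_def]; omega
  have ha_mem : ∀ j : Fin k, a j ∈ Finset.Icc 1 n := by
    intro j
    have hmul : ((j : ℕ) + 1) * p ≤ k * p := Nat.mul_le_mul_right p (by omega)
    have hmul' : (j : ℕ) * p + p ≤ k * p := by rw [add_mul, one_mul] at hmul; exact hmul
    simp only [ha_def, Finset.mem_Icc]
    omega
  have ha_dvd : ∀ j : Fin k, p ∣ 2 * a j - 1 := by
    intro j; rw [h2a j]
    exact Dvd.dvd.add (Dvd.dvd.mul_left (dvd_mul_left p _) 2) dvd_rfl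
  have ha_mono : StrictMono a := by
    intro j1 j2 h
    simp only [ha_def]
    have : (j1 : ℕ) * p < (j2 : ℕ) * p :=
      (Nat.mul_lt_mul_right (by omega : 0 < p)).mpr (by exact_mod_cast h)
    omega
  -- characterization of multiples
  have hchar : ∀ i : ℕ, i ∈ Finset.Icc 1 n → p ∣ 2 * i - 1 → ∃ j : Fin k, i = a j := by
    intro i hi hdvd
    rw [Finset.mem_Icc] at hi
    obtain ⟨c, hc⟩ := hdvd
    have hoddc : Odd c := by
      have h1 : Odd (2 * i - 1) := by rw [Nat.odd_iff]; omega
      rw [hc, Nat.odd_mul] at h1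
      exact h1.2
    obtain ⟨j, hj⟩ := hoddc
    have hcb : p * c < p * (2 * k + 1) := by
      have hcomm : p * (2 * k + 1) = (2 * k + 1) * p := mul_comm _ _
      omega
    have hjk : j < k := by
      have := Nat.lt_of_mul_lt_mul_left hcb
      omega
    refine ⟨⟨j, hjk⟩, ?_⟩
    have h2aj := h2a ⟨j, hjk⟩
    have hpc : p * c = p * (2 * j) + p := by rw [hj]; ring
    have hpj : p * (2 * j) = 2 * (j * p) := by ring
    have hcoe : ((⟨j, hjk⟩ : Fin k) : ℕ) = j := rfl
    rw [hcoe] at h2aj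
    have haj1 : 1 ≤ a ⟨j, hjk⟩ := by
      have := ha_mem ⟨j, hjk⟩; rw [Finset.mem_Icc] at this; exact this.1
    omega
  -- valuation of 2 i - 1
  have hvm : ∀ i : ℕ, i ∈ Finset.Icc 1 n →
      padicValNat p (2 * i - 1) = if p ∣ 2 * i - 1 then 1 else 0 := by
    intro i hi
    rw [Finset.mem_Icc] at hi
    split_ifs with hd
    · refine le_antisymm ?_ (one_le_padicValNat_of_dvd (by omega) hd)
      by_contra hgt
      have h2le : 2 ≤ padicValNat p (2 * i - 1) := by omega
      have : p ^ 2 ∣ 2 * i - 1 := (padicValNat_dvd_iff_le (by omega)).mpr h2le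
      have hle := Nat.le_of_dvd (by omega) this
      have : p ^ 2 = p * p := sq p
      omega
    · exact padicValNat.eq_zero_of_not_dvd hd
  -- the set and term
  set S := (Fintype.piFinset fun _ : Fin k => Finset.Icc 1 n).filter
      (fun i => ∀ p q : Fin k, p < q → i p < i q) with hS_def
  set T : (Fin k → ℕ) → ℚ := fun i => ∏ j : Fin k, (1 : ℚ) / (2 * ((i j : ℕ) : ℚ) - 1) ^ (s j)
    with hT_def
  have hmemS : ∀ i ∈ S, (∀ j, i j ∈ Finset.Icc 1 n) ∧ ∀ q r : Fin k, q < r → i q < i r := by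
    intro i hi
    rw [hS_def, Finset.mem_filter, Fintype.mem_piFinset] at hi
    exact hi
  -- cast lemma
  have hcast : ∀ (m : ℕ), 1 ≤ m → (2 : ℚ) * (m : ℚ) - 1 = ((2 * m - 1 : ℕ) : ℚ) := by
    intro m hm
    have : (2 * m - 1 : ℕ) = 2 * m - 1 := rfl
    rw [Nat.cast_sub (by omega)]
    push_cast; ring
  -- positivity of terms
  have hTpos : ∀ i ∈ S, 0 < T i := by
    intro i hi
    obtain ⟨hmem, -⟩ := hmemS i hi
    rw [hT_def]
    apply Finset.prod_pos
    intro j _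
    have h1 : 1 ≤ i j := (Finset.mem_Icc.mp (hmem j)).1
    rw [hcast (i j) h1]
    have : (0 : ℚ) < ((2 * i j - 1 : ℕ) : ℚ) := by
      have : 1 ≤ 2 * i j - 1 := by omega
      exact_mod_cast Nat.lt_of_lt_of_le Nat.zero_lt_one (by exact_mod_cast this)
    positivity
  -- valuation of terms
  have hvT : ∀ i ∈ S, padicValRat p (T i) =
      -∑ j : Fin k, (if p ∣ 2 * i j - 1 then (s j : ℤ) else 0) := by
    intro i hi
    obtain ⟨hmem, -⟩ := hmemS i hi
    rw [hT_def]
    rw [aux_padicValRat_prod]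
    · rw [← Finset.sum_neg_distrib]
      apply Finset.sum_congr rfl
      intro j _
      have h1 : 1 ≤ i j := (Finset.mem_Icc.mp (hmem j)).1
      have hm0 : ((2 * i j - 1 : ℕ) : ℚ) ≠ 0 := by
        have h2 : (2 * i j - 1 : ℕ) ≠ 0 := by omega
        exact_mod_cast h2
      rw [hcast (i j) h1, one_div, padicValRat.inv, padicValRat.pow _,
        padicValRat.of_nat, hvm (i j) (hmem j)]
      split_ifs with hd
      · simp
      · simp
    · intro j _
      have h1 : 1 ≤ i j := (Finset.mem_Icc.mp (hmem j)).1
      rw [hcast (i j) h1]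
      have hpos : (0 : ℚ) < ((2 * i j - 1 : ℕ) : ℚ) := by
        have : 0 < 2 * i j - 1 := by omega
        exact_mod_cast this
      positivity
  -- a ∈ S
  have haS : a ∈ S := by
    rw [hS_def, Finset.mem_filter, Fintype.mem_piFinset]
    exact ⟨fun j => ha_mem j, fun q r h => ha_mono h⟩
  -- valuation of the special term
  have hvTa : padicValRat p (T a) = -(∑ j : Fin k, (s j : ℤ)) := by
    rw [hvT a haS]
    congr 1
    apply Finset.sum_congr rfl
    intro j _
    rw [if_pos (ha_dvd j)]
  -- other terms have strictly bigger valuation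
  have hother : ∀ i ∈ S.erase a, padicValRat p (T a) < padicValRat p (T i) := by
    intro i hi
    have hiS : i ∈ S := Finset.mem_of_mem_erase hi
    have hine : i ≠ a := Finset.ne_of_mem_erase hi
    obtain ⟨hmem, hinc⟩ := hmemS i hiS
    have hi_mono : StrictMono i := fun q r h => hinc q r h
    -- there is a coordinate not divisible
    have hex : ∃ j0 : Fin k, ¬ p ∣ 2 * i j0 - 1 := by
      by_contra hall
      push_neg at hall
      have hrange : ∀ j : Fin k, ∃ j' : Fin k, i j = a j' := by
        intro j
        exact hchar (i j) (hmem j) (hall j)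
      -- ranges are equal
      have hsub : Finset.image i Finset.univ ⊆ Finset.image a Finset.univ := by
        intro x hx
        rw [Finset.mem_image] at hx ⊢
        obtain ⟨j, -, rfl⟩ := hx
        obtain ⟨j', hj'⟩ := hrange j
        exact ⟨j', Finset.mem_univ _, hj'.symm⟩
      have hcard : (Finset.image a Finset.univ).card ≤ (Finset.image i Finset.univ).card := by
        rw [Finset.card_image_of_injective _ ha_mono.injective,
          Finset.card_image_of_injective _ hi_mono.injective]
      have heq : Finset.image i Finset.univ = Finset.image a Finset.univ :=
        Finset.eq_of_subset_of_card_le hsub hcard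
      have hrangeeq : Set.range i = Set.range a := by
        have := congrArg (fun t : Finset ℕ => (t : Set ℕ)) heq
        simpa [Set.image_univ] using this
      haveI hw : WellFoundedLT (Fin k) := inferInstance
      exact hine ((@StrictMono.range_inj (Fin k) ℕ _ _ hw i a hi_mono ha_mono).1 hrangeeq)
    obtain ⟨j0, hj0⟩ := hex
    rw [hvT i hiS, hvTa]
    rw [neg_lt_neg_iff]
    apply Finset.sum_lt_sum
    · intro j _
      split_ifs
      · exact le_refl _
      · positivity
    · refine ⟨j0, Finset.mem_univ _, ?_⟩
      rw [if_neg hj0]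
      exact_mod_cast hs j0
  -- conclude
  have hHodd : Hodd k n s = ∑ i ∈ S, T i := rfl
  rw [hHodd, ← Finset.add_sum_erase S T haS]
  rcases (S.erase a).eq_empty_or_nonempty with he | hne
  · rw [he, Finset.sum_empty, add_zero, hvTa]
  · have hRpos : 0 < ∑ i ∈ S.erase a, T i :=
      Finset.sum_pos (fun i hi => hTpos i (Finset.mem_of_mem_erase hi)) hne
    have hTapos : 0 < T a := hTpos a haS
    have hlt : padicValRat p (T a) < padicValRat p (∑ i ∈ S.erase a, T i) :=
      aux_lt_padicValRat_sum hne (fun i hi => hTpos i (Finset.mem_of_mem_erase hi)) hother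
    rw [padicValRat.add_eq_of_lt (by positivity) (ne_of_gt hTapos) (ne_of_gt hRpos) hlt, hvTa]
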